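/- Let ϕ : S → ℓᵖ be a disintegration of ℓᵖ (p ≥ 1, p ≠ 2) and let {Cₙ} be a partition of S into almost norm-maximizing chains. Then the vectors inf ϕ[C₀], inf ϕ[C₁], … are pairwise disjointly supported, and for each j ∈ ℕ there is a unique n such that supp(inf ϕ[Cₙ]) = {j}. -/

import Mathlib

open scoped ENNReal
open Filter

noncomputable section

abbrev ellp (p : ℝ≥0∞) := lp (fun _ : ℕ => ℂ) p

/-- the standard basis vector `e n` -/
noncomputable def stdb (p : ℝ≥0∞) (n : ℕ) : ellp p := lp.single p n 1

/-- `f` and `g` are disjointly supported -/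
def DisjSupp {p : ℝ≥0∞} (f g : ellp p) : Prop := ∀ n : ℕ, f n = 0 ∨ g n = 0

/-- the subvector relation: `f = g · χ_A` for some `A ⊆ ℕ` -/
def Subvec {p : ℝ≥0∞} (f g : ellp p) : Prop :=
  ∃ A : Set ℕ, ⇑f = A.indicator ⇑g

/-- a tree is a prefix-closed set of finite sequences of naturals -/
def IsTree (S : Set (List ℕ)) : Prop := ∀ ν ∈ S, ∀ ν' : List ℕ, ν' <+: ν → ν' ∈ S

/-- `ν'` is a child of `ν` in `S` -/
def ChildIn (S : Set (List ℕ)) (ν ν' : List ℕ) : Prop :=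
  ν' ∈ S ∧ ∃ m : ℕ, ν' = ν ++ [m]

/-- `ν` is a nonterminal node of `S` -/
def Nonterminal (S : Set (List ℕ)) (ν : List ℕ) : Prop := ∃ ν', ChildIn S ν ν'

/-- a disintegration of `ℓᵖ`: injective, never zero, separating, summative, with
linearly dense range -/
structure Disintegration (p : ℝ≥0∞) [Fact (1 ≤ p)] (S : Set (List ℕ)) (φ : List ℕ → ellp p) : Prop where
  tree : IsTree S
  inj : Set.InjOn φ S
  nonzero : ∀ ν ∈ S, φ ν ≠ 0
  separating : ∀ ν ∈ S, ∀ ν' ∈ S, ¬ν <+: ν' → ¬ν' <+: ν → DisjSupp (φ ν) (φ ν')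
  summative : ∀ ν ∈ S, Nonterminal S ν →
    HasSum (fun μ : {μ : List ℕ // ChildIn S ν μ} => φ μ.val) (φ ν)
  dense : Dense (Submodule.span ℂ (φ '' S) : Set (ellp p))

/-- a chain with respect to the prefix (ancestor) order -/
def PrefixChain (C : Set (List ℕ)) : Prop := ∀ ν ∈ C, ∀ ν' ∈ C, ν <+: ν' ∨ ν' <+: ν

/-- an almost norm-maximizing chain -/
def ANMChain (p : ℝ≥0∞) (S : Set (List ℕ)) (φ : List ℕ → ellp p)
    (C : Set (List ℕ)) : Prop :=
  C ⊆ S ∧ PrefixChain C ∧ ∀ ν ∈ C, Nonterminal S ν →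
    ∃ ν', ν' ∈ C ∧ ChildIn S ν ν' ∧ ∀ μ, ChildIn S ν μ →
      ‖φ μ‖ ^ p.toReal ≤ ‖φ ν'‖ ^ p.toReal + 2 ^ (-(ν.length : ℤ))

/-- `g` is the greatest lower bound of `A` in the subvector order -/
def IsSubvecGLB {p : ℝ≥0∞} (g : ellp p) (A : Set (ellp p)) : Prop :=
  (∀ h ∈ A, Subvec g h) ∧ ∀ g', (∀ h ∈ A, Subvec g' h) → Subvec g' g
lemma p_ne_zero {p : ℝ≥0∞} [Fact (1 ≤ p)] : p ≠ 0 := by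
  have h : (1:ℝ≥0∞) ≤ p := Fact.out
  intro h0; rw [h0] at h; simp at h

noncomputable def evalCLM (p : ℝ≥0∞) [Fact (1 ≤ p)] (k : ℕ) : ellp p →L[ℂ] ℂ :=
  LinearMap.mkContinuous
    { toFun := fun f => f k
      map_add' := fun f g => by simp [lp.coeFn_add]
      map_smul' := fun c f => by simp [lp.coeFn_smul] }
    1 (fun f => by rw [one_mul]; exact lp.norm_apply_le_norm p_ne_zero f k)

@[simp] lemma evalCLM_apply {p : ℝ≥0∞} [Fact (1 ≤ p)] (k : ℕ) (f : ellp p) :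
    evalCLM p k f = f k := rfl

variable {p : ℝ≥0∞} [Fact (1 ≤ p)] {S : Set (List ℕ)} {φ : List ℕ → ellp p}

lemma children_incomp {ν : List ℕ} {m m' : ℕ} (h : m ≠ m') : ¬ (ν ++ [m] <+: ν ++ [m']) := by
  intro h'
  have := h'.eq_of_length (by simp)
  simp at this; exact h this

/-- distinct children are disjointly supported -/
lemma children_disj (hφ : Disintegration p S φ) {ν μ μ' : List ℕ}
    (hμ : ChildIn S ν μ) (hμ' : ChildIn S ν μ') (hne : μ ≠ μ') :
    DisjSupp (φ μ) (φ μ') := by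
  obtain ⟨hμS, m, rfl⟩ := hμ
  obtain ⟨hμ'S, m', rfl⟩ := hμ'
  have hmm : m ≠ m' := by rintro rfl; exact hne rfl
  exact hφ.separating _ hμS _ hμ'S (children_incomp hmm) (children_incomp hmm.symm)

/-- the coordinatewise sum rule -/
lemma coord_hasSum (hφ : Disintegration p S φ) {ν : List ℕ} (hν : ν ∈ S)
    (hnt : Nonterminal S ν) (k : ℕ) :
    HasSum (fun μ : {μ : List ℕ // ChildIn S ν μ} => φ μ.val k) (φ ν k) := by
  simpa using (hφ.summative ν hν hnt).mapL (evalCLM p k)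

lemma child_value (hφ : Disintegration p S φ) {ν μ : List ℕ} (hν : ν ∈ S)
    (hμ : ChildIn S ν μ) {k : ℕ} (h : φ μ k ≠ 0) : φ μ k = φ ν k := by
  have hs := coord_hasSum hφ hν ⟨μ, hμ⟩ k
  have h1 : HasSum (fun μ' : {μ' : List ℕ // ChildIn S ν μ'} => φ μ'.val k) (φ μ k) := by
    apply hasSum_single (⟨μ, hμ⟩ : {μ' : List ℕ // ChildIn S ν μ'})
    rintro ⟨μ', hμ'⟩ hne
    have hne' : μ' ≠ μ := by intro h'; exact hne (by simpa using h')
    rcases children_disj hφ hμ' hμ hne' k with h0 | h0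
    · exact h0
    · exact absurd h0 h
  exact h1.unique hs

lemma child_exists (hφ : Disintegration p S φ) {ν : List ℕ} (hν : ν ∈ S)
    (hnt : Nonterminal S ν) {k : ℕ} (h : φ ν k ≠ 0) :
    ∃ μ, ChildIn S ν μ ∧ φ μ k ≠ 0 := by
  by_contra hc
  push_neg at hc
  have : HasSum (fun μ : {μ : List ℕ // ChildIn S ν μ} => φ μ.val k) 0 := by
    convert hasSum_zero with μ
    exact hc μ.1 μ.2
  exact h ((coord_hasSum hφ hν hnt k).unique this)

lemma prefix_value (hφ : Disintegration p S φ) {ν ν' : List ℕ} (hν : ν ∈ S)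
    (hν' : ν' ∈ S) (hpre : ν <+: ν') {k : ℕ} (h : φ ν' k ≠ 0) : φ ν' k = φ ν k := by
  obtain ⟨l, rfl⟩ := hpre
  induction l using List.reverseRecOn with
  | nil => simp
  | append_singleton l m ih =>
    have hmid : ν ++ l ∈ S := hφ.tree _ hν' _ ⟨[m], by simp⟩
    have hch : ChildIn S (ν ++ l) (ν ++ (l ++ [m])) := ⟨hν', m, by simp⟩
    have h1 : φ (ν ++ (l ++ [m])) k = φ (ν ++ l) k := child_value hφ hmid hch h
    rw [h1] at h ⊢
    exact ih hmid h

lemma comparable (hφ : Disintegration p S φ) {ν ν' : List ℕ} (hν : ν ∈ S) (hν' : ν' ∈ S)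
    {k : ℕ} (h : φ ν k ≠ 0) (h' : φ ν' k ≠ 0) : ν <+: ν' ∨ ν' <+: ν := by
  by_contra hc
  push_neg at hc
  rcases hφ.separating ν hν ν' hν' hc.1 hc.2 k with h0 | h0
  · exact h h0
  · exact h' h0

lemma pt_pos (hptop : p ≠ ∞) : 0 < p.toReal :=
  ENNReal.toReal_pos p_ne_zero hptop

lemma norm_rpow_le_of_pointwise (hptop : p ≠ ∞) {f g : ellp p}
    (h : ∀ k, ‖f k‖ ≤ ‖g k‖) : ‖f‖ ^ p.toReal ≤ ‖g‖ ^ p.toReal := by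
  have hpt := pt_pos (p := p) hptop
  rw [lp.norm_rpow_eq_tsum hpt, lp.norm_rpow_eq_tsum hpt]
  refine Summable.tsum_le_tsum (fun k => ?_) ((lp.memℓp f).summable hpt) ((lp.memℓp g).summable hpt)
  exact Real.rpow_le_rpow (norm_nonneg _) (h k) hpt.le

lemma child_pointwise (hφ : Disintegration p S φ) {ν μ : List ℕ} (hν : ν ∈ S)
    (hμ : ChildIn S ν μ) (k : ℕ) : ‖φ μ k‖ ≤ ‖φ ν k‖ := by
  by_cases h : φ μ k = 0
  · simp [h]
  · rw [child_value hφ hν hμ h]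

lemma child_norm_le (hφ : Disintegration p S φ) (hptop : p ≠ ∞) {ν μ : List ℕ}
    (hν : ν ∈ S) (hμ : ChildIn S ν μ) : ‖φ μ‖ ^ p.toReal ≤ ‖φ ν‖ ^ p.toReal :=
  norm_rpow_le_of_pointwise hptop (child_pointwise hφ hν hμ)

lemma two_children_norm (hφ : Disintegration p S φ) (hptop : p ≠ ∞) {ν μ₁ μ₂ : List ℕ}
    (hν : ν ∈ S) (h₁ : ChildIn S ν μ₁) (h₂ : ChildIn S ν μ₂) (hne : μ₁ ≠ μ₂) :
    ‖φ μ₁‖ ^ p.toReal + ‖φ μ₂‖ ^ p.toReal ≤ ‖φ ν‖ ^ p.toReal := by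
  have hpt := pt_pos (p := p) hptop
  rw [lp.norm_rpow_eq_tsum hpt, lp.norm_rpow_eq_tsum hpt, lp.norm_rpow_eq_tsum hpt,
    ← Summable.tsum_add ((lp.memℓp (φ μ₁)).summable hpt) ((lp.memℓp (φ μ₂)).summable hpt)]
  refine Summable.tsum_le_tsum (fun k => ?_)
    (Summable.add ((lp.memℓp (φ μ₁)).summable hpt) ((lp.memℓp (φ μ₂)).summable hpt))
    ((lp.memℓp (φ ν)).summable hpt)
  have hb₁ := Real.rpow_le_rpow (norm_nonneg _) (child_pointwise hφ hν h₁ k) hpt.le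
  have hb₂ := Real.rpow_le_rpow (norm_nonneg _) (child_pointwise hφ hν h₂ k) hpt.le
  have hnn : (0:ℝ) ≤ ‖φ ν k‖ ^ p.toReal := Real.rpow_nonneg (norm_nonneg _) _
  rcases children_disj hφ h₁ h₂ hne k with h0 | h0 <;>
    simp only [h0, norm_zero, Real.zero_rpow hpt.ne', zero_add, add_zero] <;> assumption

lemma coord_le_norm (hptop : p ≠ ∞) (f : ellp p) (k : ℕ) :
    ‖f k‖ ^ p.toReal ≤ ‖f‖ ^ p.toReal :=
  Real.rpow_le_rpow (norm_nonneg _) (lp.norm_apply_le_norm p_ne_zero f k) (pt_pos hptop).le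

/-- basic consequence of the subvector relation -/
lemma subvec_apply {f g : ellp p} (h : Subvec f g) {k : ℕ} (hk : f k ≠ 0) :
    f k = g k ∧ g k ≠ 0 := by
  obtain ⟨A, hA⟩ := h
  have hk' := congrFun hA k
  by_cases hm : k ∈ A
  · rw [Set.indicator_of_mem hm] at hk'
    exact ⟨hk', fun h0 => hk (by rw [hk', h0])⟩
  · rw [Set.indicator_of_notMem hm] at hk'
    exact absurd hk' hk

lemma chain_min {C : Set (List ℕ)} (hne : C.Nonempty) (hchain : ∀ ν ∈ C, ∀ ν' ∈ C, ν <+: ν' ∨ ν' <+: ν) :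
    ∃ ν₀ ∈ C, ∀ ν ∈ C, ν₀ <+: ν := by
  obtain ⟨ν₁, hν₁⟩ := hne
  have hTne : {l : ℕ | ∃ ν ∈ C, ν.length = l}.Nonempty := ⟨ν₁.length, ν₁, hν₁, rfl⟩
  obtain ⟨ν₀, hν₀, hlen⟩ := Nat.sInf_mem hTne
  refine ⟨ν₀, hν₀, fun ν hν => ?_⟩
  have hle : ν₀.length ≤ ν.length := hlen ▸ Nat.sInf_le ⟨ν, hν, rfl⟩
  rcases hchain ν₀ hν₀ ν hν with h | h
  · exact h
  · rw [h.eq_of_length (le_antisymm h.length_le hle)]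

/-- if the infimum is nonzero at k, every chain element is nonzero at k with the same value -/
lemma glb_coord {C : Set (List ℕ)} {g : ellp p} (hg : IsSubvecGLB g (φ '' C))
    {ν : List ℕ} (hν : ν ∈ C) {k : ℕ} (hk : g k ≠ 0) : g k = φ ν k ∧ φ ν k ≠ 0 :=
  subvec_apply (hg.1 (φ ν) ⟨ν, hν, rfl⟩) hk

/-- if every chain element is nonzero at k, so is the infimum -/
lemma glb_nonzero (hφ : Disintegration p S φ) {C : Set (List ℕ)} (hCne : C.Nonempty)
    (hCS : C ⊆ S) (hchain : PrefixChain C) {g : ellp p} (hg : IsSubvecGLB g (φ '' C))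
    {k : ℕ} (hk : ∀ ν ∈ C, φ ν k ≠ 0) : g k ≠ 0 := by
  obtain ⟨ν₀, hν₀, hmin⟩ := chain_min hCne hchain
  set f : ellp p := lp.single p k (φ ν₀ k) with hf
  have hfapp : ∀ m, f m = if m = k then φ ν₀ k else 0 := by
    intro m
    by_cases hm : m = k
    · subst hm; simp [hf, lp.single_apply_self]
    · simp [hf, lp.single_apply_ne p k _ hm, hm]
  have hsub : ∀ h ∈ φ '' C, Subvec f h := by
    rintro _ ⟨ν, hν, rfl⟩
    refine ⟨{k}, funext fun m => ?_⟩
    by_cases hm : m = k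
    · subst hm
      rw [hfapp, if_pos rfl]
      have hv := prefix_value hφ (hCS hν₀) (hCS hν) (hmin ν hν) (hk ν hν)
      simp [hv]
    · rw [hfapp, if_neg hm]
      simp [hm]
  have hsg : Subvec f g := hg.2 f hsub
  have hfk : f k ≠ 0 := by rw [hfapp, if_pos rfl]; exact hk ν₀ hν₀
  have := subvec_apply hsg hfk
  exact this.2

lemma dense_functional (hφ : Disintegration p S φ) (T : ellp p →L[ℂ] ℂ)
    (hT : ∀ ν ∈ S, T (φ ν) = 0) : ∀ f, T f = 0 := by
  have hle : Submodule.span ℂ (φ '' S) ≤ LinearMap.ker (T : ellp p →ₗ[ℂ] ℂ) := by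
    rw [Submodule.span_le]
    rintro _ ⟨ν, hν, rfl⟩
    exact LinearMap.mem_ker.mpr (hT ν hν)
  have heq : Set.EqOn T (0 : ellp p →L[ℂ] ℂ) (Submodule.span ℂ (φ '' S) : Set (ellp p)) :=
    fun x hx => LinearMap.mem_ker.mp (hle hx)
  have := Continuous.ext_on hφ.dense T.continuous (map_continuous _) heq
  intro f
  simpa using congrFun this f

lemma chain_reaches (hφ : Disintegration p S φ) {C : Set (List ℕ)} (hC : ANMChain p S φ C)
    {j : ℕ} (hall : ∀ ν ∈ C, φ ν j ≠ 0) {ν₀ : List ℕ} (hν₀S : ν₀ ∈ S) (hν₀j : φ ν₀ j ≠ 0) :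
    ∀ d : ℕ, ∀ μ ∈ C, μ <+: ν₀ → ν₀.length - μ.length = d → ν₀ ∈ C := by
  intro d
  induction d with
  | zero =>
    intro μ hμ hpre hd
    have hle := hpre.length_le
    have : μ = ν₀ := hpre.eq_of_length (by omega)
    exact this ▸ hμ
  | succ d ih =>
    intro μ hμ hpre hd
    have hle := hpre.length_le
    have hlt : μ.length < ν₀.length := by omega
    obtain ⟨l, hl⟩ := hpre
    cases l with
    | nil => simp [← hl] at hlt
    | cons a l' =>
      have hch : μ ++ [a] <+: ν₀ := ⟨l', by simp [← hl]⟩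
      have hchS : μ ++ [a] ∈ S := hφ.tree _ hν₀S _ hch
      have hnt : Nonterminal S μ := ⟨μ ++ [a], hchS, a, rfl⟩
      obtain ⟨ν', hν'C, hν'child, -⟩ := hC.2.2 μ hμ hnt
      have hν'S : ν' ∈ S := hC.1 hν'C
      have hν'len : ν'.length = μ.length + 1 := by
        obtain ⟨-, m', rfl⟩ := hν'child
        simp
      rcases comparable hφ hν'S hν₀S (hall ν' hν'C) hν₀j with h | h
      · exact ih ν' hν'C h (by omega)
      · have := h.length_le
        have : ν₀ = ν' := h.eq_of_length (by omega)
        exact this ▸ hν'C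
lemma min_mem_other (hφ : Disintegration p S φ) {C₁ C₂ : Set (List ℕ)}
    (h₁ : ANMChain p S φ C₁) (h₂ : ANMChain p S φ C₂)
    (h₁ne : C₁.Nonempty) (h₂ne : C₂.Nonempty) {j : ℕ}
    (hall₁ : ∀ ν ∈ C₁, φ ν j ≠ 0) (hall₂ : ∀ ν ∈ C₂, φ ν j ≠ 0) :
    ∃ ν, ν ∈ C₁ ∧ ν ∈ C₂ := by
  obtain ⟨μ₁, hμ₁, hmin₁⟩ := chain_min h₁ne h₁.2.1
  obtain ⟨μ₂, hμ₂, hmin₂⟩ := chain_min h₂ne h₂.2.1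
  rcases comparable hφ (h₁.1 hμ₁) (h₂.1 hμ₂) (hall₁ _ hμ₁) (hall₂ _ hμ₂) with h | h
  · exact ⟨μ₂, chain_reaches hφ h₁ hall₁ (h₂.1 hμ₂) (hall₂ _ hμ₂) _ μ₁ hμ₁ h rfl, hμ₂⟩
  · exact ⟨μ₁, hμ₁, chain_reaches hφ h₂ hall₂ (h₁.1 hμ₁) (hall₁ _ hμ₁) _ μ₂ hμ₂ h rfl⟩

lemma part1 (hφ : Disintegration p S φ) (C : ℕ → Set (List ℕ))
    (hanm : ∀ n, ANMChain p S φ (C n)) (hne : ∀ n, (C n).Nonempty)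
    (hpart : ∀ ν ∈ S, ∃! n : ℕ, ν ∈ C n)
    (g : ℕ → ellp p) (hg : ∀ n, IsSubvecGLB (g n) (φ '' C n)) :
    ∀ m n, m ≠ n → DisjSupp (g m) (g n) := by
  intro m n hmn j
  by_contra hc
  push_neg at hc
  obtain ⟨hm, hn⟩ := hc
  have hallm : ∀ ν ∈ C m, φ ν j ≠ 0 := fun ν hν => (glb_coord (hg m) hν hm).2
  have halln : ∀ ν ∈ C n, φ ν j ≠ 0 := fun ν hν => (glb_coord (hg n) hν hn).2
  obtain ⟨ν, h1, h2⟩ := min_mem_other hφ (hanm m) (hanm n) (hne m) (hne n) hallm halln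
  exact hmn ((hpart ν ((hanm m).1 h1)).unique h1 h2)

lemma coords_proportional (hφ : Disintegration p S φ) {j k : ℕ} (hjk : j ≠ k) {c d : ℂ}
    (hd : d ≠ 0)
    (hprop : ∀ ν ∈ S, (φ ν j = 0 ∧ φ ν k = 0) ∨ (φ ν j = c ∧ φ ν k = d)) : False := by
  set T : ellp p →L[ℂ] ℂ := d • evalCLM p j - c • evalCLM p k with hT
  have hT0 : ∀ ν ∈ S, T (φ ν) = 0 := by
    intro ν hν
    rcases hprop ν hν with ⟨h1, h2⟩ | ⟨h1, h2⟩ <;>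
      simp [hT, h1, h2, mul_comm]
  have h1 := dense_functional hφ T hT0 (lp.single p j 1)
  rw [hT] at h1
  simp only [ContinuousLinearMap.sub_apply, ContinuousLinearMap.smul_apply,
    evalCLM_apply, smul_eq_mul] at h1
  rw [lp.single_apply_self, lp.single_apply_ne p j _ hjk.symm] at h1
  simp at h1
  exact hd h1

lemma part2_exists (hφ : Disintegration p S φ) (hptop : p ≠ ∞) (C : ℕ → Set (List ℕ))
    (hanm : ∀ n, ANMChain p S φ (C n)) (hne : ∀ n, (C n).Nonempty)
    (hpart : ∀ ν ∈ S, ∃! n : ℕ, ν ∈ C n)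
    (g : ℕ → ellp p) (hg : ∀ n, IsSubvecGLB (g n) (φ '' C n)) (j : ℕ) :
    ∃ n, {m : ℕ | g n m ≠ 0} = {j} := by
  classical
  obtain ⟨ν₁, hν₁⟩ := hne 0
  have hS0 : [] ∈ S := hφ.tree _ ((hanm 0).1 hν₁) [] (List.nil_prefix)
  have hroot : φ [] j ≠ 0 := by
    by_contra h0
    have hall : ∀ ν ∈ S, φ ν j = 0 := by
      intro ν hν
      by_contra hh
      exact ((prefix_value hφ hS0 hν List.nil_prefix hh) ▸ hh) h0
    have := dense_functional hφ (evalCLM p j) (fun ν hν => by simpa using hall ν hν)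
      (lp.single p j 1)
    rw [evalCLM_apply, lp.single_apply_self] at this
    exact one_ne_zero this
  by_cases hterm : ∃ τ ∈ S, φ τ j ≠ 0 ∧ ¬ Nonterminal S τ
  · -- CASE A : the branch through j hits a terminal node
    obtain ⟨τ, hτS, hτj, hτt⟩ := hterm
    have hbelow : ∀ ν ∈ S, τ <+: ν → ν <+: τ := by
      intro ν hν h
      obtain ⟨l, hl⟩ := h
      cases l with
      | nil => simp at hl; subst hl; exact List.prefix_refl _
      | cons a l' => exact absurd ⟨τ ++ [a], hφ.tree _ hν _ ⟨l', by simp [← hl]⟩, a, rfl⟩ hτt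
    have hpreτ : ∀ ν ∈ S, ∀ k, φ ν k ≠ 0 → φ τ k ≠ 0 → ν <+: τ := by
      intro ν hν k h1 h2
      rcases comparable hφ hν hτS h1 h2 with h | h
      · exact h
      · exact hbelow ν hν h
    have hsupp : ∀ m, m ≠ j → φ τ m = 0 := by
      intro m hmj
      by_contra hm
      refine coords_proportional hφ (Ne.symm hmj) (c := φ τ j) hm (fun ν hν => ?_)
      by_cases h1 : φ ν j = 0
      · by_cases h2 : φ ν m = 0
        · exact Or.inl ⟨h1, h2⟩
        · have hpre := hpreτ ν hν m h2 hm
          have hj' := prefix_value hφ hν hτS hpre hτj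
          exact absurd h1 (hj' ▸ hτj)
      · have hpre := hpreτ ν hν j h1 hτj
        have hj' := prefix_value hφ hν hτS hpre hτj
        have hm' := prefix_value hφ hν hτS hpre hm
        exact Or.inr ⟨hj'.symm, hm'.symm⟩
    obtain ⟨n, hn⟩ := (hpart τ hτS).exists
    refine ⟨n, Set.ext fun m => ?_⟩
    simp only [Set.mem_setOf_eq, Set.mem_singleton_iff]
    constructor
    · intro hm
      by_contra hmj
      exact (glb_coord (hg n) hn hm).2 (hsupp m hmj)
    · rintro rfl
      refine glb_nonzero hφ ⟨τ, hn⟩ (hanm n).1 (hanm n).2.1 (hg n) ?_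
      intro ν hν
      have hpre : ν <+: τ := by
        rcases (hanm n).2.1 ν hν τ hn with h | h
        · exact h
        · exact hbelow ν ((hanm n).1 hν) h
      exact (prefix_value hφ ((hanm n).1 hν) hτS hpre hτj) ▸ hτj
  · -- CASE B : every node on the branch through j is nonterminal
    push_neg at hterm
    have hstep : ∀ ν : List ℕ, ∃ μ : List ℕ,
        ν ∈ S → φ ν j ≠ 0 → ChildIn S ν μ ∧ φ μ j ≠ 0 := by
      intro ν
      by_cases h : ν ∈ S ∧ φ ν j ≠ 0
      · obtain ⟨μ, h1, h2⟩ := child_exists hφ h.1 (hterm ν h.1 h.2) h.2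
        exact ⟨μ, fun _ _ => ⟨h1, h2⟩⟩
      · exact ⟨[], fun h1 h2 => absurd ⟨h1, h2⟩ h⟩
    choose F hF using hstep
    set β : ℕ → List ℕ := fun t => F^[t] [] with hβ
    have hβ0 : β 0 = [] := rfl
    have hβsucc : ∀ t, β (t+1) = F (β t) := fun t => Function.iterate_succ_apply' F t []
    have hβinv : ∀ t, β t ∈ S ∧ φ (β t) j ≠ 0 := by
      intro t
      induction t with
      | zero => exact ⟨hS0, hroot⟩
      | succ t ih =>
        rw [hβsucc]
        obtain ⟨h1, h2⟩ := hF (β t) ih.1 ih.2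
        exact ⟨h1.1, h2⟩
    have hβchild : ∀ t, ChildIn S (β t) (β (t+1)) := fun t => by
      rw [hβsucc]; exact (hF (β t) (hβinv t).1 (hβinv t).2).1
    have hβlen : ∀ t, (β t).length = t := by
      intro t
      induction t with
      | zero => rfl
      | succ t ih =>
        obtain ⟨-, m, hm⟩ := hβchild t
        rw [hm, List.length_append, ih]
        rfl
    have hβpre : ∀ s t, s ≤ t → β s <+: β t := by
      intro s t h
      induction t, h using Nat.le_induction with
      | base => exact List.prefix_refl _
      | succ t ht ih =>
        obtain ⟨-, m, hm⟩ := hβchild t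
        exact ih.trans ⟨[m], hm.symm⟩
    have hβval : ∀ t, φ (β t) j = φ [] j := fun t =>
      prefix_value hφ hS0 (hβinv t).1 (hβ0 ▸ hβpre 0 t (Nat.zero_le t)) (hβinv t).2
    have hβmem : ∀ ν ∈ S, ∀ m, φ ν m ≠ 0 → φ (β ν.length) m ≠ 0 → ν = β ν.length := by
      intro ν hν m h h'
      rcases comparable hφ hν (hβinv ν.length).1 h h' with hh | hh
      · exact hh.eq_of_length (by rw [hβlen])
      · exact (hh.eq_of_length (by rw [hβlen])).symm
    choose N hN using fun t => (hpart (β t) (hβinv t).1).exists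
    by_cases hB1 : ∃ n t₀, ∀ t, t₀ ≤ t → β t ∈ C n
    · -- SUBCASE B1 : some chain contains a tail of the branch
      obtain ⟨n, t₀, h1⟩ := hB1
      have hallj : ∀ ν ∈ C n, φ ν j ≠ 0 := by
        intro ν hν
        have hβt : β (max t₀ ν.length) ∈ C n := h1 _ (le_max_left _ _)
        have hpre : ν <+: β (max t₀ ν.length) := by
          rcases (hanm n).2.1 ν hν _ hβt with h | h
          · exact h
          · have hl2 := h.length_le
            rw [hβlen] at hl2
            have heq : β (max t₀ ν.length) = ν :=
              h.eq_of_length (by rw [hβlen]; exact le_antisymm hl2 (le_max_right _ _))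
            rw [heq]
        exact (prefix_value hφ ((hanm n).1 hν) (hβinv _).1 hpre (hβinv _).2) ▸ (hβinv _).2
      refine ⟨n, Set.ext fun m => ?_⟩
      simp only [Set.mem_setOf_eq, Set.mem_singleton_iff]
      constructor
      · intro hm
        by_contra hmj
        have hallm : ∀ ν ∈ C n, φ ν m ≠ 0 := fun ν hν => (glb_coord (hg n) hν hm).2
        have hβm : ∀ t, φ (β t) m ≠ 0 := by
          intro t
          have h2 : φ (β (max t t₀)) m ≠ 0 := hallm _ (h1 _ (le_max_right _ _))
          exact (prefix_value hφ (hβinv t).1 (hβinv _).1 (hβpre t _ (le_max_left _ _)) h2) ▸ h2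
        have hβmv : ∀ t, φ (β t) m = φ [] m := fun t =>
          prefix_value hφ hS0 (hβinv t).1 (hβ0 ▸ hβpre 0 t (Nat.zero_le t)) (hβm t)
        refine coords_proportional hφ (Ne.symm hmj) (c := φ [] j) (hβ0 ▸ hβm 0) (fun ν hν => ?_)
        by_cases h : φ ν j = 0
        · left
          refine ⟨h, ?_⟩
          by_contra hm0
          have hb := hβmem ν hν m hm0 (hβm ν.length)
          rw [hb] at h
          exact (hβinv ν.length).2 h
        · right
          have hb := hβmem ν hν j h (hβinv ν.length).2
          exact ⟨by rw [hb]; exact hβval _, by rw [hb]; exact hβmv _⟩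
      · rintro rfl
        exact glb_nonzero hφ ⟨β t₀, h1 t₀ le_rfl⟩ (hanm n).1 (hanm n).2.1 (hg n) hallj
    · -- SUBCASE B2 : the branch switches chains infinitely often; contradiction
      exfalso
      push_neg at hB1
      have hpt := pt_pos (p := p) hptop
      have hε0 : 0 < ‖φ ([] : List ℕ) j‖ ^ p.toReal :=
        Real.rpow_pos_of_pos (norm_pos_iff.mpr hroot) _
      have haε : ∀ t, ‖φ ([] : List ℕ) j‖ ^ p.toReal ≤ ‖φ (β t)‖ ^ p.toReal := by
        intro t
        have h1 := coord_le_norm hptop (φ (β t)) j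
        rw [hβval t] at h1
        exact h1
      have hanti : ∀ s t, s ≤ t → ‖φ (β t)‖ ^ p.toReal ≤ ‖φ (β s)‖ ^ p.toReal := by
        intro s t h
        induction t, h using Nat.le_induction with
        | base => exact le_rfl
        | succ t ht ih => exact le_trans (child_norm_le hφ hptop (hβinv t).1 (hβchild t)) ih
      have hswitch : ∀ t, β (t+1) ∉ C (N t) →
          2 * ‖φ (β (t+1))‖ ^ p.toReal ≤ ‖φ (β t)‖ ^ p.toReal + 2 ^ (-(t:ℤ)) := by
        intro t hnot
        obtain ⟨ν', hν'C, hν'ch, hmax⟩ :=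
          (hanm (N t)).2.2 (β t) (hN t) ⟨β (t+1), hβchild t⟩
        have hne' : ν' ≠ β (t+1) := fun h => hnot (h ▸ hν'C)
        have h2 := two_children_norm hφ hptop (hβinv t).1 hν'ch (hβchild t) hne'
        have h3 := hmax (β (t+1)) (hβchild t)
        rw [hβlen t] at h3
        linarith
      have hsw : ∀ t₀, ∃ t, t₀ ≤ t ∧ β (t+1) ∉ C (N t) := by
        intro t₀
        by_contra hc
        push_neg at hc
        have hsame : ∀ t, t₀ ≤ t → N t = N t₀ := by
          intro t h
          induction t, h using Nat.le_induction with
          | base => rfl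
          | succ t ht ih =>
            have := (hpart (β (t+1)) (hβinv (t+1)).1).unique (hN (t+1)) (hc t ht)
            rw [this, ih]
        obtain ⟨t₁, ht₁, hnot⟩ := hB1 (N t₀) t₀
        exact hnot (hsame t₁ ht₁ ▸ hN t₁)
      have hbdd : BddBelow (Set.range fun t => ‖φ (β t)‖ ^ p.toReal) :=
        ⟨_, by rintro _ ⟨t, rfl⟩; exact haε t⟩
      have hLle : ∀ t, (⨅ s, ‖φ (β s)‖ ^ p.toReal) ≤ ‖φ (β t)‖ ^ p.toReal :=
        fun t => ciInf_le hbdd t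
      have hεL : ‖φ ([] : List ℕ) j‖ ^ p.toReal ≤ ⨅ s, ‖φ (β s)‖ ^ p.toReal := le_ciInf haε
      obtain ⟨t₂, ht₂⟩ := exists_lt_of_ciInf_lt
        (show (⨅ s, ‖φ (β s)‖ ^ p.toReal) <
          (⨅ s, ‖φ (β s)‖ ^ p.toReal) + ‖φ ([] : List ℕ) j‖ ^ p.toReal / 4 by linarith)
      obtain ⟨T, hT⟩ := exists_pow_lt_of_lt_one
        (show (0:ℝ) < ‖φ ([] : List ℕ) j‖ ^ p.toReal / 4 by linarith)
        (show (1:ℝ)/2 < 1 by norm_num)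
      obtain ⟨t, hts, hnot⟩ := hsw (max t₂ T)
      have h1 := hswitch t hnot
      have h2 : ‖φ (β t)‖ ^ p.toReal ≤ ‖φ (β t₂)‖ ^ p.toReal :=
        hanti t₂ t (le_trans (le_max_left _ _) hts)
      have h3 : (2:ℝ) ^ (-(t:ℤ)) ≤ (1/2:ℝ)^T := by
        have he : (2:ℝ) ^ (-(t:ℤ)) = (1/2:ℝ)^t := by
          rw [zpow_neg, zpow_natCast, one_div, inv_pow]
        rw [he]
        exact pow_le_pow_of_le_one (by norm_num) (by norm_num)
          (le_trans (le_max_right _ _) hts)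
      have h4 := hLle (t+1)
      have h5 := hεL
      linarith [ht₂, hT]

/-- for a partition of the domain of a disintegration into almost
norm-maximizing chains, the infima are pairwise disjointly supported, and each
singleton `{j}` is the support of exactly one of them. -/
theorem stmt_11 (p : ℝ≥0∞) [Fact (1 ≤ p)] (hptop : p ≠ ∞) (hp2 : p ≠ 2)
    (S : Set (List ℕ)) (φ : List ℕ → ellp p) (hφ : Disintegration p S φ)
    (C : ℕ → Set (List ℕ)) (hanm : ∀ n, ANMChain p S φ (C n))
    (hne : ∀ n, (C n).Nonempty)
    (hpart : ∀ ν ∈ S, ∃! n : ℕ, ν ∈ C n)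
    (g : ℕ → ellp p) (hg : ∀ n, IsSubvecGLB (g n) (φ '' C n)) :
    (∀ m n, m ≠ n → DisjSupp (g m) (g n)) ∧
    ∀ j : ℕ, ∃! n : ℕ, {m : ℕ | g n m ≠ 0} = {j} := by
  have hdisj := part1 hφ C hanm hne hpart g hg
  refine ⟨hdisj, fun j => ?_⟩
  obtain ⟨n, hn⟩ := part2_exists hφ hptop C hanm hne hpart g hg j
  refine ⟨n, hn, fun n' hn' => ?_⟩
  by_contra hnn
  have h1 : g n' j ≠ 0 := hn'.ge (Set.mem_singleton j)
  have h2 : g n j ≠ 0 := hn.ge (Set.mem_singleton j)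
  rcases hdisj n' n hnn j with h | h
  · exact h1 h
  · exact h2 h
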